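/- The influence difference function is not in general submodular: there is a directed graph on four vertices {u, v, x, y} with edges (u,v), (v,x), (x,y), where σ⁺ counts vertices reachable using all three edges and σ⁻ counts vertices reachable using only edges (v,x) and (x,y), such that for S = {u}, T = {u,x}, and element v, we have δ(S ∪ {v}) − δ(S) < δ(T ∪ {v}) − δ(T), where δ = σ⁺ − σ⁻ (as integers). -/

import Mathlib

/-- Vertices reachable from `S` via directed edges given by relation `E`. -/
def reach {V : Type*} (E : V → V → Prop) (S : Set V) : Set V :=
  {v | ∃ s ∈ S, Relation.ReflTransGen E s v}

/-- Edges known to be present: (v,x) and (x,y), with u = 0, v = 1, x = 2, y = 3. -/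
def Elow : Fin 4 → Fin 4 → Prop := fun a b => (a = 1 ∧ b = 2) ∨ (a = 2 ∧ b = 3)

/-- The uncertain edge (u,v). -/
def Eextra : Fin 4 → Fin 4 → Prop := fun a b => a = 0 ∧ b = 1

/-- Influence difference δ = σ⁺ − σ⁻ for the four-node example. -/
noncomputable def deltaEx (S : Set (Fin 4)) : ℤ :=
  ((reach (fun a b => Elow a b ∨ Eextra a b) S).ncard : ℤ) - ((reach Elow S).ncard : ℤ)

lemma reach_subset {V : Type*} (E : V → V → Prop) (S S' : Set V)
    (h1 : S ⊆ S') (h2 : ∀ a b, a ∈ S' → E a b → b ∈ S') : reach E S ⊆ S' := by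
  rintro v ⟨s, hs, hrtg⟩
  induction hrtg with
  | refl => exact h1 hs
  | tail _ hE ih => exact h2 _ _ ih hE

abbrev Ehigh : Fin 4 → Fin 4 → Prop := fun a b => Elow a b ∨ Eextra a b

lemma mem_reach {V : Type*} {E : V → V → Prop} {S : Set V} {s v : V}
    (hs : s ∈ S) (h : Relation.ReflTransGen E s v) : v ∈ reach E S := ⟨s, hs, h⟩

lemma h12 : Elow 1 2 := Or.inl ⟨rfl, rfl⟩
lemma h23 : Elow 2 3 := Or.inr ⟨rfl, rfl⟩
lemma g01 : Ehigh 0 1 := Or.inr ⟨rfl, rfl⟩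
lemma g12 : Ehigh 1 2 := Or.inl h12
lemma g23 : Ehigh 2 3 := Or.inl h23

lemma reach_high_of_zero (S : Set (Fin 4)) (h0 : (0 : Fin 4) ∈ S) :
    reach Ehigh S = ↑({0,1,2,3} : Finset (Fin 4)) := by
  apply Set.Subset.antisymm
  · intro v _; fin_cases v <;> simp
  · intro v hv
    simp only [Finset.coe_insert, Finset.coe_singleton, Set.mem_insert_iff,
      Set.mem_singleton_iff] at hv
    rcases hv with rfl | rfl | rfl | rfl
    · exact mem_reach h0 .refl
    · exact mem_reach h0 (.single g01)
    · exact mem_reach h0 ((Relation.ReflTransGen.single g01).tail g12)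
    · exact mem_reach h0 (((Relation.ReflTransGen.single g01).tail g12).tail g23)

lemma reach_low_zero : reach Elow {0} = ↑({0} : Finset (Fin 4)) := by
  apply Set.Subset.antisymm
  · apply reach_subset
    · simp
    · rintro a b ha (⟨rfl, rfl⟩ | ⟨rfl, rfl⟩) <;> simp_all
  · intro v hv
    simp only [Finset.coe_singleton, Set.mem_singleton_iff] at hv
    subst hv; exact mem_reach rfl .refl

lemma reach_low_of_one (S : Set (Fin 4)) (h0 : ∀ s ∈ S, s = 0 ∨ s = 1 ∨ s = 2)
    (h1 : (1 : Fin 4) ∈ S) (h2 : (0 : Fin 4) ∈ S) :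
    reach Elow S = ↑({0,1,2,3} : Finset (Fin 4)) := by
  apply Set.Subset.antisymm
  · intro v _; fin_cases v <;> simp
  · intro v hv
    simp only [Finset.coe_insert, Finset.coe_singleton, Set.mem_insert_iff,
      Set.mem_singleton_iff] at hv
    rcases hv with rfl | rfl | rfl | rfl
    · exact mem_reach h2 .refl
    · exact mem_reach h1 .refl
    · exact mem_reach h1 (.single h12)
    · exact mem_reach h1 ((Relation.ReflTransGen.single h12).tail h23)

lemma reach_low_02 : reach Elow {0, 2} = ↑({0,2,3} : Finset (Fin 4)) := by
  apply Set.Subset.antisymm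
  · apply reach_subset
    · simp
    · rintro a b ha (⟨rfl, rfl⟩ | ⟨rfl, rfl⟩) <;> simp_all
  · intro v hv
    simp only [Finset.coe_insert, Finset.coe_singleton, Set.mem_insert_iff,
      Set.mem_singleton_iff] at hv
    rcases hv with rfl | rfl | rfl
    · exact mem_reach (Or.inl rfl) .refl
    · exact mem_reach (Or.inr rfl) .refl
    · exact mem_reach (Or.inr rfl) (.single h23)

theorem deltaEx_not_submodular :
    deltaEx ({0} ∪ {1}) - deltaEx {0} < deltaEx ({0, 2} ∪ {1}) - deltaEx {0, 2} := by
  have e1 : reach Ehigh ({0} ∪ {1} : Set (Fin 4)) = ↑({0,1,2,3} : Finset (Fin 4)) :=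
    reach_high_of_zero _ (Or.inl rfl)
  have e2 : reach Elow ({0} ∪ {1} : Set (Fin 4)) = ↑({0,1,2,3} : Finset (Fin 4)) := by
    apply reach_low_of_one
    · rintro s (rfl | rfl) <;> simp
    · exact Or.inr rfl
    · exact Or.inl rfl
  have e3 : reach Ehigh ({0} : Set (Fin 4)) = ↑({0,1,2,3} : Finset (Fin 4)) :=
    reach_high_of_zero _ rfl
  have e5 : reach Ehigh ({0, 2} ∪ {1} : Set (Fin 4)) = ↑({0,1,2,3} : Finset (Fin 4)) :=
    reach_high_of_zero _ (Or.inl (Or.inl rfl))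
  have e6 : reach Elow ({0, 2} ∪ {1} : Set (Fin 4)) = ↑({0,1,2,3} : Finset (Fin 4)) := by
    apply reach_low_of_one
    · rintro s ((rfl | rfl) | rfl) <;> simp
    · exact Or.inr rfl
    · exact Or.inl (Or.inl rfl)
  have e7 : reach Ehigh ({0, 2} : Set (Fin 4)) = ↑({0,1,2,3} : Finset (Fin 4)) :=
    reach_high_of_zero _ (Or.inl rfl)
  simp only [deltaEx]
  rw [show (fun a b => Elow a b ∨ Eextra a b) = Ehigh from rfl] at *
  rw [e1, e2, e3, e5, e6, e7, reach_low_zero, reach_low_02]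
  simp only [Set.ncard_coe_finset]
  decide
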